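/- Let x(k) ∈ ℝ^{n̄}, u(k) ∈ ℝ^{q̄} satisfy x(k+1) = A x(k) + B u(k) for all k ∈ ℕ for some matrices A, B (Assumption EXO). Let A(k) ∈ ℝ^{n̄×n̄}, B(k) ∈ ℝ^{n̄×q̄} be matrix sequences with A(k) → Â and B(k) → B̂ as k → ∞, and suppose that for every k there are residual vectors e*_1(k),…,e*_{N̄}(k) with x(j) = A(k)x(j−1) + B(k)u(j−1) + e*_{j−k+N̄}(k) for j = k−N̄+1,…,k, and e*_j(k) → 0 as k → ∞ for each j. Then there exist nonnegative sequences ω_1(k), ω_2(k), ω_3(k) converging to zero such that for all k ∈ ℕ and all i = 0,…,N̄−1, the i-step prediction error e_i(k) := Â^i x(k) + Σ_{l=0}^{i−1} Â^{i−1−l}B̂ u(k+l) − x(k+i) satisfies ‖e_i(k)‖² ≤ ω_1(k) + ω_2(k)‖x(k)‖² + ω_3(k) Σ_{l=0}^{i−1} ‖u(k+l)‖². -/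

import Mathlib

open Matrix Filter Topology

def mnrm {a b : ℕ} (M : Matrix (Fin a) (Fin b) ℝ) : ℝ := ∑ i, ∑ j, |M i j|

lemma mnrm_nonneg {a b : ℕ} (M : Matrix (Fin a) (Fin b) ℝ) : 0 ≤ mnrm M :=
  Finset.sum_nonneg fun _ _ => Finset.sum_nonneg fun _ _ => abs_nonneg _

lemma mnrm_zero {a b : ℕ} : mnrm (0 : Matrix (Fin a) (Fin b) ℝ) = 0 := by
  simp [mnrm]

lemma norm_mulVec_le_mnrm {a b : ℕ} (M : Matrix (Fin a) (Fin b) ℝ) (v : Fin b → ℝ) :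
    ‖M.mulVec v‖ ≤ mnrm M * ‖v‖ := by
  have h0 : 0 ≤ mnrm M * ‖v‖ := mul_nonneg (mnrm_nonneg M) (norm_nonneg v)
  rw [pi_norm_le_iff_of_nonneg h0]
  intro i
  have h1 : M.mulVec v i = ∑ j, M i j * v j := rfl
  rw [Real.norm_eq_abs, h1]
  calc |∑ j, M i j * v j| ≤ ∑ j, |M i j * v j| := Finset.abs_sum_le_sum_abs _ _
    _ ≤ ∑ j, |M i j| * ‖v‖ := by
        refine Finset.sum_le_sum fun j _ => ?_
        rw [abs_mul]
        exact mul_le_mul_of_nonneg_left ((Real.norm_eq_abs (v j)) ▸ norm_le_pi_norm v j)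
          (abs_nonneg _)
    _ = (∑ j, |M i j|) * ‖v‖ := by rw [Finset.sum_mul]
    _ ≤ mnrm M * ‖v‖ := by
        refine mul_le_mul_of_nonneg_right ?_ (norm_nonneg _)
        exact Finset.single_le_sum (f := fun i => ∑ j, |M i j|)
          (fun _ _ => Finset.sum_nonneg fun _ _ => abs_nonneg _) (Finset.mem_univ i)

lemma tendsto_entry {a b : ℕ} {f : ℕ → Matrix (Fin a) (Fin b) ℝ} {L : Matrix (Fin a) (Fin b) ℝ}
    (h : Tendsto f atTop (nhds L)) (i : Fin a) (j : Fin b) :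
    Tendsto (fun k => f k i j) atTop (nhds (L i j)) :=
  tendsto_pi_nhds.mp (tendsto_pi_nhds.mp h i) j

lemma mnrm_tendsto {a b : ℕ} {f : ℕ → Matrix (Fin a) (Fin b) ℝ} {L : Matrix (Fin a) (Fin b) ℝ}
    (h : Tendsto f atTop (nhds L)) :
    Tendsto (fun k => mnrm (f k)) atTop (nhds (mnrm L)) := by
  unfold mnrm
  exact tendsto_finset_sum _ fun i _ => tendsto_finset_sum _ fun j _ => (tendsto_entry h i j).abs

lemma tendsto_mmul {a b c : ℕ} {f : ℕ → Matrix (Fin a) (Fin b) ℝ}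
    {g : ℕ → Matrix (Fin b) (Fin c) ℝ} {F : Matrix (Fin a) (Fin b) ℝ}
    {G : Matrix (Fin b) (Fin c) ℝ}
    (hf : Tendsto f atTop (nhds F)) (hg : Tendsto g atTop (nhds G)) :
    Tendsto (fun k => f k * g k) atTop (nhds (F * G)) := by
  refine tendsto_pi_nhds.mpr ?_
  intro i
  rw [tendsto_pi_nhds]
  intro j
  simp only [Matrix.mul_apply]
  exact tendsto_finset_sum _ fun m _ => (tendsto_entry hf i m).mul (tendsto_entry hg m j)

lemma tendsto_mpow {a : ℕ} {f : ℕ → Matrix (Fin a) (Fin a) ℝ} {F : Matrix (Fin a) (Fin a) ℝ}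
    (hf : Tendsto f atTop (nhds F)) (n : ℕ) :
    Tendsto (fun k => f k ^ n) atTop (nhds (F ^ n)) := by
  induction n with
  | zero => simp
  | succ n ih =>
    simp only [pow_succ]
    exact tendsto_mmul ih hf

/-- Theorem 2(ii) of the paper: if the data satisfy Assumption
EXO and the estimated matrices `A(k), B(k)` converge and fit the data over a
window of length `N̄` with vanishing residuals, then the `i`-step predictors
built from the limits `Â, B̂` are asymptotically accurate along the data:
the squared prediction errors are bounded by vanishing sequences
`ω_1(k) + ω_2(k)‖x(k)‖² + ω_3(k)∑‖u(k+l)‖²`. -/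
theorem stmt12 (nb qb Nb : ℕ)
    (x : ℤ → Fin nb → ℝ) (u : ℤ → Fin qb → ℝ)
    (hx0 : ∀ k : ℤ, k < 0 → x k = 0) (hu0 : ∀ k : ℤ, k < 0 → u k = 0)
    -- Assumption EXO
    (Am : Matrix (Fin nb) (Fin nb) ℝ) (Bm : Matrix (Fin nb) (Fin qb) ℝ)
    (hEXO : ∀ k : ℤ, 0 ≤ k → x (k + 1) = Am.mulVec (x k) + Bm.mulVec (u k))
    -- the estimated matrices and their limits
    (A : ℕ → Matrix (Fin nb) (Fin nb) ℝ) (B : ℕ → Matrix (Fin nb) (Fin qb) ℝ)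
    (Ahat : Matrix (Fin nb) (Fin nb) ℝ) (Bhat : Matrix (Fin nb) (Fin qb) ℝ)
    (hA : Tendsto A atTop (nhds Ahat)) (hB : Tendsto B atTop (nhds Bhat))
    -- residuals of the window equations, vanishing as k → ∞
    (estar : ℕ → ℕ → Fin nb → ℝ)
    (hres : ∀ (k : ℕ) (j : ℕ), 1 ≤ j → j ≤ Nb →
      x ((k : ℤ) - (Nb : ℤ) + j)
        = (A k).mulVec (x ((k : ℤ) - (Nb : ℤ) + j - 1))
          + (B k).mulVec (u ((k : ℤ) - (Nb : ℤ) + j - 1)) + estar k j)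
    (hresto : ∀ j : ℕ, Tendsto (fun k => estar k j) atTop (nhds 0)) :
    ∃ ω1 ω2 ω3 : ℕ → ℝ,
      (∀ k, 0 ≤ ω1 k) ∧ (∀ k, 0 ≤ ω2 k) ∧ (∀ k, 0 ≤ ω3 k) ∧
      Tendsto ω1 atTop (nhds 0) ∧ Tendsto ω2 atTop (nhds 0) ∧
      Tendsto ω3 atTop (nhds 0) ∧
      ∀ (k : ℕ) (i : ℕ), i < Nb →
        ‖(Ahat ^ i).mulVec (x (k : ℤ))
            + (∑ l ∈ Finset.range i,
                (Ahat ^ (i - 1 - l) * Bhat).mulVec (u ((k : ℤ) + l)))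
            - x ((k : ℤ) + i)‖ ^ 2
          ≤ ω1 k + ω2 k * ‖x (k : ℤ)‖ ^ 2
            + ω3 k * ∑ l ∈ Finset.range i, ‖u ((k : ℤ) + l)‖ ^ 2 := by
  rcases Nat.eq_zero_or_pos Nb with hNb | hNb
  · subst hNb
    exact ⟨fun _ => 0, fun _ => 0, fun _ => 0, fun _ => le_rfl, fun _ => le_rfl, fun _ => le_rfl,
      tendsto_const_nhds, tendsto_const_nhds, tendsto_const_nhds,
      fun k i hi => absurd hi (Nat.not_lt_zero i)⟩
  -- the window index used for time k
  set k' : ℕ → ℕ := fun k => k + (Nb - 1) with hk'def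
  -- one-step equation inside the window of k'
  have hstep : ∀ (k i : ℕ), i + 1 < Nb →
      x ((k : ℤ) + i + 1) = (A (k' k)).mulVec (x ((k : ℤ) + i))
        + (B (k' k)).mulVec (u ((k : ℤ) + i)) + estar (k' k) (i + 2) := by
    intro k i h
    have h1 := hres (k' k) (i + 2) (by omega) (by omega)
    have e1 : (k' k : ℤ) - (Nb : ℤ) + ((i + 2 : ℕ) : ℤ) = (k : ℤ) + i + 1 := by
      simp only [hk'def]; omega
    have e2 : (k' k : ℤ) - (Nb : ℤ) + ((i + 2 : ℕ) : ℤ) - 1 = (k : ℤ) + i := by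
      simp only [hk'def]; omega
    rw [e2, e1] at h1
    exact h1
  -- closed-form expression for x (k+i) via the window matrices
  have hiden : ∀ (k i : ℕ), i < Nb →
      x ((k : ℤ) + i) = ((A (k' k)) ^ i).mulVec (x (k : ℤ))
        + ∑ l ∈ Finset.range i, ((A (k' k)) ^ (i - 1 - l)).mulVec
            ((B (k' k)).mulVec (u ((k : ℤ) + l)) + estar (k' k) (l + 2)) := by
    intro k i
    induction i with
    | zero => intro _; simp
    | succ i ih =>
      intro h
      have hx := hstep k i h
      rw [ih (by omega)] at hx
      have ecast : ((k : ℤ) + ((i : ℕ) + 1 : ℕ)) = (k : ℤ) + i + 1 := by push_cast; ring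
      rw [ecast, hx]
      rw [Matrix.mulVec_add]
      have hmsum : (A (k' k)).mulVec
          (∑ l ∈ Finset.range i, ((A (k' k)) ^ (i - 1 - l)).mulVec
            ((B (k' k)).mulVec (u ((k : ℤ) + l)) + estar (k' k) (l + 2)))
          = ∑ l ∈ Finset.range i, ((A (k' k)) ^ (i + 1 - 1 - l)).mulVec
            ((B (k' k)).mulVec (u ((k : ℤ) + l)) + estar (k' k) (l + 2)) := by
        rw [← Matrix.mulVecLin_apply, map_sum]
        refine Finset.sum_congr rfl fun l hl => ?_
        have hl' := Finset.mem_range.mp hl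
        rw [Matrix.mulVecLin_apply, Matrix.mulVec_mulVec, ← pow_succ']
        rw [show i - 1 - l + 1 = i + 1 - 1 - l from by omega]
      rw [hmsum, Matrix.mulVec_mulVec, ← pow_succ']
      rw [Finset.sum_range_succ]
      rw [show i + 1 - 1 - i = 0 from by omega, pow_zero, Matrix.one_mulVec]
      abel
  -- error formula
  have herr : ∀ (k i : ℕ), i < Nb →
      (Ahat ^ i).mulVec (x (k : ℤ))
          + (∑ l ∈ Finset.range i,
              (Ahat ^ (i - 1 - l) * Bhat).mulVec (u ((k : ℤ) + l)))
          - x ((k : ℤ) + i)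
      = (Ahat ^ i - (A (k' k)) ^ i).mulVec (x (k : ℤ))
          + ∑ l ∈ Finset.range i,
              ((Ahat ^ (i - 1 - l) * Bhat
                - (A (k' k)) ^ (i - 1 - l) * (B (k' k))).mulVec (u ((k : ℤ) + l)))
          - ∑ l ∈ Finset.range i,
              (((A (k' k)) ^ (i - 1 - l)).mulVec (estar (k' k) (l + 2))) := by
    intro k i h
    rw [hiden k i h]
    simp only [Matrix.sub_mulVec, Matrix.mulVec_add, ← Matrix.mulVec_mulVec,
      Finset.sum_add_distrib, Finset.sum_sub_distrib]
    abel
  -- the vanishing coefficient sequences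
  set P : ℕ → ℝ := fun k => ∑ i ∈ Finset.range Nb, mnrm (Ahat ^ i - (A (k' k)) ^ i) with hPdef
  set Q : ℕ → ℝ := fun k => ∑ a ∈ Finset.range Nb,
    mnrm (Ahat ^ a * Bhat - (A (k' k)) ^ a * (B (k' k))) with hQdef
  set S : ℕ → ℝ := fun k => ∑ a ∈ Finset.range Nb, mnrm ((A (k' k)) ^ a) with hSdef
  set T : ℕ → ℝ := fun k => ∑ j ∈ Finset.range (Nb + 2), ‖estar (k' k) j‖ with hTdef
  have hA' : Tendsto (fun k => A (k' k)) atTop (nhds Ahat) :=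
    hA.comp (tendsto_add_atTop_nat (Nb - 1))
  have hB' : Tendsto (fun k => B (k' k)) atTop (nhds Bhat) :=
    hB.comp (tendsto_add_atTop_nat (Nb - 1))
  have hPto : Tendsto P atTop (nhds 0) := by
    have h1 : Tendsto (fun k => ∑ i ∈ Finset.range Nb, mnrm (Ahat ^ i - (A (k' k)) ^ i))
        atTop (nhds (∑ i ∈ Finset.range Nb, mnrm ((0 : Matrix (Fin nb) (Fin nb) ℝ)))) := by
      refine tendsto_finset_sum _ fun i _ => ?_
      have h2 : Tendsto (fun k => Ahat ^ i - (A (k' k)) ^ i) atTop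
          (nhds (Ahat ^ i - Ahat ^ i)) := tendsto_const_nhds.sub (tendsto_mpow hA' i)
      rw [sub_self] at h2
      exact mnrm_tendsto h2
    simpa [mnrm_zero] using h1
  have hQto : Tendsto Q atTop (nhds 0) := by
    have h1 : Tendsto (fun k => ∑ a ∈ Finset.range Nb,
        mnrm (Ahat ^ a * Bhat - (A (k' k)) ^ a * (B (k' k))))
        atTop (nhds (∑ a ∈ Finset.range Nb, mnrm ((0 : Matrix (Fin nb) (Fin qb) ℝ)))) := by
      refine tendsto_finset_sum _ fun a _ => ?_
      have h2 : Tendsto (fun k => Ahat ^ a * Bhat - (A (k' k)) ^ a * (B (k' k))) atTop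
          (nhds (Ahat ^ a * Bhat - Ahat ^ a * Bhat)) :=
        tendsto_const_nhds.sub (tendsto_mmul (tendsto_mpow hA' a) hB')
      rw [sub_self] at h2
      exact mnrm_tendsto h2
    simpa [mnrm_zero] using h1
  have hSto : Tendsto S atTop (nhds (∑ a ∈ Finset.range Nb, mnrm (Ahat ^ a))) :=
    tendsto_finset_sum _ fun a _ => mnrm_tendsto (tendsto_mpow hA' a)
  have hTto : Tendsto T atTop (nhds 0) := by
    have h1 : Tendsto T atTop (nhds (∑ _j ∈ Finset.range (Nb + 2), (0 : ℝ))) := by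
      refine tendsto_finset_sum _ fun j _ => ?_
      have h2 : Tendsto (fun k => estar (k' k) j) atTop (nhds 0) :=
        (hresto j).comp (tendsto_add_atTop_nat (Nb - 1))
      exact tendsto_zero_iff_norm_tendsto_zero.mp h2
    simpa using h1
  have hSTto : Tendsto (fun k => S k * T k) atTop (nhds 0) := by
    simpa using hSto.mul hTto
  have hPnn : ∀ k, 0 ≤ P k := fun k => Finset.sum_nonneg fun _ _ => mnrm_nonneg _
  have hQnn : ∀ k, 0 ≤ Q k := fun k => Finset.sum_nonneg fun _ _ => mnrm_nonneg _
  have hSnn : ∀ k, 0 ≤ S k := fun k => Finset.sum_nonneg fun _ _ => mnrm_nonneg _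
  have hTnn : ∀ k, 0 ≤ T k := fun k => Finset.sum_nonneg fun _ _ => norm_nonneg _
  refine ⟨fun k => 3 * ((Nb : ℝ) * (S k * T k)) ^ 2, fun k => 3 * (P k) ^ 2,
    fun k => 3 * (Nb : ℝ) * (Q k) ^ 2, fun k => by positivity, fun k => by positivity,
    fun k => by positivity, ?_, ?_, ?_, ?_⟩
  · have := (((hSTto.const_mul ((Nb : ℝ))).pow 2).const_mul 3)
    simpa using this
  · have := ((hPto.pow 2).const_mul 3)
    simpa using this
  · have := ((hQto.pow 2).const_mul (3 * (Nb : ℝ)))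
    simpa [mul_assoc] using this
  intro k i hi
  rw [herr k i hi]
  set U : ℝ := ∑ l ∈ Finset.range i, ‖u ((k : ℤ) + l)‖ with hUdef
  set V : ℝ := ∑ l ∈ Finset.range i, ‖u ((k : ℤ) + l)‖ ^ 2 with hVdef
  have hUnn : 0 ≤ U := Finset.sum_nonneg fun _ _ => norm_nonneg _
  have hVnn : 0 ≤ V := Finset.sum_nonneg fun _ _ => sq_nonneg _
  -- bound the three pieces
  have h1 : ‖(Ahat ^ i - (A (k' k)) ^ i).mulVec (x (k : ℤ))‖ ≤ P k * ‖x (k : ℤ)‖ := by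
    refine (norm_mulVec_le_mnrm _ _).trans ?_
    refine mul_le_mul_of_nonneg_right ?_ (norm_nonneg _)
    exact Finset.single_le_sum (f := fun i => mnrm (Ahat ^ i - (A (k' k)) ^ i))
      (fun _ _ => mnrm_nonneg _) (Finset.mem_range.mpr hi)
  have h2 : ‖∑ l ∈ Finset.range i,
      ((Ahat ^ (i - 1 - l) * Bhat
        - (A (k' k)) ^ (i - 1 - l) * (B (k' k))).mulVec (u ((k : ℤ) + l)))‖ ≤ Q k * U := by
    refine (norm_sum_le _ _).trans ?_
    rw [hUdef, Finset.mul_sum]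
    refine Finset.sum_le_sum fun l hl => ?_
    refine (norm_mulVec_le_mnrm _ _).trans ?_
    refine mul_le_mul_of_nonneg_right ?_ (norm_nonneg _)
    exact Finset.single_le_sum
      (f := fun a => mnrm (Ahat ^ a * Bhat - (A (k' k)) ^ a * (B (k' k))))
      (fun _ _ => mnrm_nonneg _) (Finset.mem_range.mpr (by omega))
  have h3 : ‖∑ l ∈ Finset.range i,
      (((A (k' k)) ^ (i - 1 - l)).mulVec (estar (k' k) (l + 2)))‖
      ≤ (Nb : ℝ) * (S k * T k) := by
    refine (norm_sum_le _ _).trans ?_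
    have h4 : ∀ l ∈ Finset.range i,
        ‖((A (k' k)) ^ (i - 1 - l)).mulVec (estar (k' k) (l + 2))‖ ≤ S k * T k := by
      intro l hl
      refine (norm_mulVec_le_mnrm _ _).trans ?_
      refine mul_le_mul ?_ ?_ (norm_nonneg _) (hSnn k)
      · exact Finset.single_le_sum (f := fun a => mnrm ((A (k' k)) ^ a))
          (fun _ _ => mnrm_nonneg _) (Finset.mem_range.mpr (by omega))
      · exact Finset.single_le_sum (f := fun j => ‖estar (k' k) j‖)
          (fun _ _ => norm_nonneg _) (Finset.mem_range.mpr (by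
            have := Finset.mem_range.mp hl; omega))
    refine (Finset.sum_le_sum h4).trans ?_
    rw [Finset.sum_const, Finset.card_range, nsmul_eq_mul]
    refine mul_le_mul_of_nonneg_right ?_ (mul_nonneg (hSnn k) (hTnn k))
    exact_mod_cast Nat.cast_le.mpr hi.le
  -- Cauchy–Schwarz
  have hU2 : U ^ 2 ≤ (Nb : ℝ) * V := by
    have hcs : U ^ 2 ≤ ((Finset.range i).card : ℝ) * V := by
      rw [hUdef, hVdef]
      exact sq_sum_le_card_mul_sum_sq (s := Finset.range i)
        (f := fun l => ‖u ((k : ℤ) + l)‖)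
    refine hcs.trans ?_
    rw [Finset.card_range]
    exact mul_le_mul_of_nonneg_right (by exact_mod_cast hi.le) hVnn
  -- assemble
  have hE : ‖(Ahat ^ i - (A (k' k)) ^ i).mulVec (x (k : ℤ))
      + ∑ l ∈ Finset.range i,
          ((Ahat ^ (i - 1 - l) * Bhat
            - (A (k' k)) ^ (i - 1 - l) * (B (k' k))).mulVec (u ((k : ℤ) + l)))
      - ∑ l ∈ Finset.range i,
          (((A (k' k)) ^ (i - 1 - l)).mulVec (estar (k' k) (l + 2)))‖
      ≤ P k * ‖x (k : ℤ)‖ + Q k * U + (Nb : ℝ) * (S k * T k) := by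
    refine (norm_sub_le _ _).trans ?_
    refine add_le_add ((norm_add_le _ _).trans (add_le_add h1 h2)) h3
  have hxnn : (0:ℝ) ≤ ‖x (k : ℤ)‖ := norm_nonneg _
  have hsq := pow_le_pow_left₀ (norm_nonneg _) hE 2
  have hQU2 : (Q k * U) ^ 2 ≤ (Q k) ^ 2 * ((Nb : ℝ) * V) := by
    calc (Q k * U) ^ 2 = (Q k) ^ 2 * U ^ 2 := by ring
      _ ≤ (Q k) ^ 2 * ((Nb : ℝ) * V) := mul_le_mul_of_nonneg_left hU2 (sq_nonneg _)
  dsimp only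
  refine hsq.trans ?_
  nlinarith [sq_nonneg (P k * ‖x (k : ℤ)‖ - Q k * U),
    sq_nonneg (P k * ‖x (k : ℤ)‖ - (Nb : ℝ) * (S k * T k)),
    sq_nonneg (Q k * U - (Nb : ℝ) * (S k * T k)), hQU2]
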